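/- Shannon's perfect secrecy bound: suppose X (plaintext), K (key) are independent finite random variables, C = f(X,K) is the ciphertext, and there is a decoder g with g(C,K) = X almost surely. If C is independent of X (perfect secrecy), then H(K) ≥ H(X). -/
import Mathlib


open scoped BigOperators Classical

noncomputable def prob {Ω : Type*} [Fintype Ω] (p : Ω → ℝ) (E : Ω → Prop) : ℝ :=
  ∑ ω, if E ω then p ω else 0

/-- Shannon entropy of a finitely-valued random variable. -/
noncomputable def entropy {Ω A : Type*} [Fintype Ω] [Fintype A] (p : Ω → ℝ) (X : Ω → A) : ℝ :=
  -∑ a, prob p (fun ω => X ω = a) * Real.logb 2 (prob p (fun ω => X ω = a))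

section aux
variable {Ω : Type*} [Fintype Ω] {p : Ω → ℝ}

lemma prob_nonneg (hp0 : ∀ ω, 0 ≤ p ω) (E : Ω → Prop) : 0 ≤ prob p E :=
  Finset.sum_nonneg fun ω _ => by by_cases h : E ω <;> simp [h, hp0 ω]

lemma prob_congr {E F : Ω → Prop} (h : ∀ ω, p ω ≠ 0 → (E ω ↔ F ω)) :
    prob p E = prob p F := by
  refine Finset.sum_congr rfl fun ω _ => ?_
  by_cases hp : p ω = 0
  · simp [hp]
  · simp only [h ω hp]

lemma prob_mono (hp0 : ∀ ω, 0 ≤ p ω) {E F : Ω → Prop}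
    (h : ∀ ω, p ω ≠ 0 → E ω → F ω) : prob p E ≤ prob p F := by
  refine Finset.sum_le_sum fun ω _ => ?_
  by_cases hp : p ω = 0
  · simp [hp]
  · by_cases hE : E ω
    · simp [hE, h ω hp hE]
    · by_cases hF : F ω <;> simp [hE, hF, hp0 ω]

lemma prob_partition {B : Type*} [Fintype B] (Y : Ω → B) (E : Ω → Prop) :
    ∑ b, prob p (fun ω => E ω ∧ Y ω = b) = prob p E := by
  unfold prob
  rw [Finset.sum_comm]
  refine Finset.sum_congr rfl fun ω _ => ?_
  by_cases hE : E ω <;> simp [hE]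

lemma gibbs {ι : Type*} [Fintype ι] (u v : ι → ℝ) (hu : ∀ i, 0 ≤ u i) (hv : ∀ i, 0 ≤ v i)
    (h : ∀ i, u i ≠ 0 → v i ≠ 0) (hsum : ∑ i, v i ≤ ∑ i, u i) :
    ∑ i, u i * Real.log (v i) ≤ ∑ i, u i * Real.log (u i) := by
  have key : ∀ i, u i * Real.log (v i) - u i * Real.log (u i) ≤ v i - u i := by
    intro i
    rcases eq_or_lt_of_le (hu i) with h0 | hpos
    · simp only [← h0, zero_mul, sub_zero, sub_self]
      exact hv i
    · have hv' : 0 < v i := lt_of_le_of_ne (hv i) (Ne.symm (h i hpos.ne'))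
      have hlog := Real.log_le_sub_one_of_pos (div_pos hv' hpos)
      rw [Real.log_div hv'.ne' hpos.ne'] at hlog
      have := mul_le_mul_of_nonneg_left hlog hpos.le
      have hne : u i ≠ 0 := hpos.ne'
      calc u i * Real.log (v i) - u i * Real.log (u i)
          = u i * (Real.log (v i) - Real.log (u i)) := by ring
        _ ≤ u i * (v i / u i - 1) := this
        _ = v i - u i := by field_simp
  have hs : ∑ i, (u i * Real.log (v i) - u i * Real.log (u i)) ≤ ∑ i, (v i - u i) :=
    Finset.sum_le_sum fun i _ => key i
  rw [Finset.sum_sub_distrib, Finset.sum_sub_distrib] at hs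
  linarith

lemma grouping {K A : Type*} [Fintype K] [Fintype A] (q : K → ℝ) (hq : ∀ k, 0 ≤ q k)
    (π : K → A) (x : A → ℝ)
    (hx : ∀ a, x a = ∑ k ∈ Finset.univ.filter (fun k => π k = a), q k) (C0 : ℝ) :
    ∑ k, q k * (Real.log (q k) - C0) ≤ ∑ a, x a * (Real.log (x a) - C0) := by
  have hxk : ∀ k, q k ≤ x (π k) := by
    intro k
    rw [hx]
    exact Finset.single_le_sum (f := q) (fun i _ => hq i) (by simp)
  have main : ∑ k, q k * Real.log (q k) ≤ ∑ k, q k * Real.log (x (π k)) := by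
    refine Finset.sum_le_sum fun k _ => ?_
    rcases eq_or_lt_of_le (hq k) with h0 | hpos
    · simp [← h0]
    · exact mul_le_mul_of_nonneg_left (Real.log_le_log hpos (hxk k)) (hq k)
  have rearr : ∀ F : A → ℝ, ∑ k, q k * F (π k) = ∑ a, x a * F a := by
    intro F
    rw [← Finset.sum_fiberwise_of_maps_to (t := Finset.univ) (fun k _ => Finset.mem_univ (π k))
      (fun k => q k * F (π k))]
    refine Finset.sum_congr rfl fun a _ => ?_
    rw [hx, Finset.sum_mul]
    refine Finset.sum_congr rfl fun k hk => ?_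
    rw [(Finset.mem_filter.1 hk).2]
  have h1 := rearr (fun a => Real.log (x a))
  have h2 := rearr (fun _ => (1:ℝ))
  simp only [mul_one] at h2
  simp only [mul_sub]
  rw [Finset.sum_sub_distrib, Finset.sum_sub_distrib, ← Finset.sum_mul, ← Finset.sum_mul, h2]
  have := main.trans_eq h1
  linarith

end aux

lemma sum_prob_eq_one {Ω B : Type*} [Fintype Ω] [Fintype B] {p : Ω → ℝ}
    (hp1 : ∑ ω, p ω = 1) (Y : Ω → B) : ∑ b, prob p (fun ω => Y ω = b) = 1 := by
  have h := prob_partition (p := p) Y (fun _ => True)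
  simp only [true_and] at h
  rw [h]
  unfold prob
  simpa using hp1

lemma core {A K C : Type*} [Fintype A] [Fintype K] [Fintype C]
    (pX : A → ℝ) (pK : K → ℝ) (pC : C → ℝ) (r : K → C → ℝ) (s : A → C → ℝ) (g : C → K → A)
    (hrnn : ∀ k c, 0 ≤ r k c)
    (hpCnn : ∀ c, 0 ≤ pC c)
    (hKsum : ∑ k, pK k = 1) (hCsum : ∑ c, pC c = 1)
    (hrK : ∀ k, ∑ c, r k c = pK k)
    (hrleK : ∀ k c, r k c ≤ pK k) (hrleC : ∀ k c, r k c ≤ pC c)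
    (hsX : ∀ a c, s a c = pX a * pC c)
    (hdecomp : ∀ a c, s a c = ∑ k ∈ Finset.univ.filter (fun k => g c k = a), r k c) :
    ∑ k, pK k * Real.log (pK k) ≤ ∑ a, pX a * Real.log (pX a) := by
  have hpKnn : ∀ k, 0 ≤ pK k := fun k => (hrK k) ▸ Finset.sum_nonneg fun c _ => hrnn k c
  have hpK0 : ∀ k c, r k c ≠ 0 → pK k ≠ 0 := fun k c h h0 =>
    h (le_antisymm (h0 ▸ hrleK k c) (hrnn k c))
  have hpC0 : ∀ k c, r k c ≠ 0 → pC c ≠ 0 := fun k c h h0 =>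
    h (le_antisymm (h0 ▸ hrleC k c) (hrnn k c))
  -- step 1 : Gibbs
  have gib : ∑ kc : K × C, r kc.1 kc.2 * Real.log (pK kc.1 * pC kc.2)
      ≤ ∑ kc : K × C, r kc.1 kc.2 * Real.log (r kc.1 kc.2) := by
    apply gibbs _ _ (fun kc => hrnn _ _) (fun kc => mul_nonneg (hpKnn _) (hpCnn _))
      (fun kc h => mul_ne_zero (hpK0 _ _ h) (hpC0 _ _ h))
    have hv : ∑ kc : K × C, pK kc.1 * pC kc.2 = 1 := by
      rw [Fintype.sum_prod_type]
      simp only [← Finset.mul_sum, hCsum, mul_one]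
      exact hKsum
    have hu : ∑ kc : K × C, r kc.1 kc.2 = 1 := by
      rw [Fintype.sum_prod_type]
      rw [Finset.sum_congr rfl fun k _ => hrK k]
      exact hKsum
    rw [hv, hu]
  have e1 : ∑ kc : K × C, r kc.1 kc.2 * Real.log (pK kc.1 * pC kc.2)
      = ∑ kc : K × C, (r kc.1 kc.2 * Real.log (pK kc.1) + r kc.1 kc.2 * Real.log (pC kc.2)) := by
    refine Finset.sum_congr rfl fun kc _ => ?_
    by_cases h : r kc.1 kc.2 = 0
    · simp [h]
    · rw [Real.log_mul (hpK0 _ _ h) (hpC0 _ _ h), mul_add]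
  have e2 : ∑ k, pK k * Real.log (pK k) = ∑ kc : K × C, r kc.1 kc.2 * Real.log (pK kc.1) := by
    rw [Fintype.sum_prod_type]
    dsimp only
    refine Finset.sum_congr rfl fun k _ => ?_
    rw [← Finset.sum_mul, hrK]
  have e3 : ∑ kc : K × C, (r kc.1 kc.2 * (Real.log (r kc.1 kc.2) - Real.log (pC kc.2)))
      = ∑ kc : K × C, r kc.1 kc.2 * Real.log (r kc.1 kc.2)
        - ∑ kc : K × C, r kc.1 kc.2 * Real.log (pC kc.2) := by
    rw [← Finset.sum_sub_distrib]
    exact Finset.sum_congr rfl fun kc _ => by ring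
  have T1 : ∑ k, pK k * Real.log (pK k)
      ≤ ∑ kc : K × C, (r kc.1 kc.2 * (Real.log (r kc.1 kc.2) - Real.log (pC kc.2))) := by
    rw [e1, Finset.sum_add_distrib] at gib
    rw [e2, e3]
    linarith
  -- step 2 : grouping
  have hg : ∀ c, ∑ k, r k c * (Real.log (r k c) - Real.log (pC c))
      ≤ ∑ a, s a c * (Real.log (s a c) - Real.log (pC c)) := fun c =>
    grouping (fun k => r k c) (fun k => hrnn k c) (g c) (fun a => s a c)
      (fun a => hdecomp a c) _
  have hterm : ∀ a c, s a c * (Real.log (s a c) - Real.log (pC c)) = s a c * Real.log (pX a) := by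
    intro a c
    by_cases h : s a c = 0
    · simp [h]
    · have hx : pX a ≠ 0 := fun h0 => h (by rw [hsX, h0, zero_mul])
      have hc : pC c ≠ 0 := fun h0 => h (by rw [hsX, h0, mul_zero])
      rw [hsX, Real.log_mul hx hc, ← hsX]
      ring
  have hsum_s : ∀ a, ∑ c, s a c = pX a := by
    intro a
    simp only [hsX]
    rw [← Finset.mul_sum, hCsum, mul_one]
  have e4 : ∑ kc : K × C, (r kc.1 kc.2 * (Real.log (r kc.1 kc.2) - Real.log (pC kc.2)))
      = ∑ c, ∑ k, r k c * (Real.log (r k c) - Real.log (pC c)) := by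
    rw [Fintype.sum_prod_type]
    dsimp only
    exact Finset.sum_comm
  have T2 : ∑ kc : K × C, (r kc.1 kc.2 * (Real.log (r kc.1 kc.2) - Real.log (pC kc.2)))
      ≤ ∑ a, pX a * Real.log (pX a) := by
    rw [e4]
    calc ∑ c, ∑ k, r k c * (Real.log (r k c) - Real.log (pC c))
        ≤ ∑ c, ∑ a, s a c * (Real.log (s a c) - Real.log (pC c)) :=
          Finset.sum_le_sum fun c _ => hg c
      _ = ∑ a, ∑ c, s a c * Real.log (pX a) := by
          rw [Finset.sum_comm]
          exact Finset.sum_congr rfl fun a _ => Finset.sum_congr rfl fun c _ => hterm a c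
      _ = ∑ a, pX a * Real.log (pX a) := by
          refine Finset.sum_congr rfl fun a _ => ?_
          rw [← Finset.sum_mul, hsum_s]
  exact T1.trans T2

/-- Shannon's perfect secrecy bound: if plaintext `X` and key `Key` are independent,
the ciphertext `f (X, Key)` is decodable via `g` almost surely, and the ciphertext is
independent of `X` (perfect secrecy), then `H(Key) ≥ H(X)`. -/
theorem shannon_perfect_secrecy_bound {Ω A K C : Type*}
    [Fintype Ω] [Fintype A] [Fintype K] [Fintype C]
    (p : Ω → ℝ) (hp0 : ∀ ω, 0 ≤ p ω) (hp1 : ∑ ω, p ω = 1)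
    (X : Ω → A) (Key : Ω → K) (f : A → K → C) (g : C → K → A)
    (hindep : ∀ a k, prob p (fun ω => X ω = a ∧ Key ω = k)
        = prob p (fun ω => X ω = a) * prob p (fun ω => Key ω = k))
    (hdec : prob p (fun ω => g (f (X ω) (Key ω)) (Key ω) ≠ X ω) = 0)
    (hsec : ∀ c a, prob p (fun ω => f (X ω) (Key ω) = c ∧ X ω = a)
        = prob p (fun ω => f (X ω) (Key ω) = c) * prob p (fun ω => X ω = a)) :
    entropy p Key ≥ entropy p X := by
  classical
  set Cf : Ω → C := fun ω => f (X ω) (Key ω) with hCfdef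
  -- almost-everywhere decodability
  have hae : ∀ ω, p ω ≠ 0 → g (Cf ω) (Key ω) = X ω := by
    intro ω hω
    by_contra hne
    unfold prob at hdec
    have hterm := (Finset.sum_eq_zero_iff_of_nonneg
      (fun ω' _ => by dsimp only; split; exacts [hp0 ω', le_rfl])).1 hdec ω (Finset.mem_univ ω)
    rw [if_pos hne] at hterm
    exact hω hterm
  have main : ∑ k, prob p (fun ω => Key ω = k) * Real.log (prob p (fun ω => Key ω = k))
      ≤ ∑ a, prob p (fun ω => X ω = a) * Real.log (prob p (fun ω => X ω = a)) := by
    apply core (fun a => prob p (fun ω => X ω = a)) (fun k => prob p (fun ω => Key ω = k))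
      (fun c => prob p (fun ω => Cf ω = c)) (fun k c => prob p (fun ω => Key ω = k ∧ Cf ω = c))
      (fun a c => prob p (fun ω => X ω = a ∧ Cf ω = c)) g
    · exact fun k c => prob_nonneg hp0 _
    · exact fun c => prob_nonneg hp0 _
    · exact sum_prob_eq_one hp1 Key
    · exact sum_prob_eq_one hp1 Cf
    · exact fun k => prob_partition Cf _
    · exact fun k c => prob_mono hp0 fun ω _ h => h.1
    · exact fun k c => prob_mono hp0 fun ω _ h => h.2
    · intro a c
      rw [prob_congr (F := fun ω => Cf ω = c ∧ X ω = a) (fun ω _ => and_comm), hsec c a,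
        mul_comm]
    · intro a c
      have h1 : prob p (fun ω => X ω = a ∧ Cf ω = c)
          = prob p (fun ω => g c (Key ω) = a ∧ Cf ω = c) := by
        refine prob_congr fun ω hω => ?_
        constructor
        · rintro ⟨hXa, hC⟩
          refine ⟨?_, hC⟩
          rw [← hC, hae ω hω, hXa]
        · rintro ⟨hg, hC⟩
          refine ⟨?_, hC⟩
          rw [← hae ω hω, hC]
          exact hg
      have h2 : ∑ k, prob p (fun ω => (g c (Key ω) = a ∧ Cf ω = c) ∧ Key ω = k)
          = prob p (fun ω => g c (Key ω) = a ∧ Cf ω = c) := prob_partition _ _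
      have h3 : ∀ k, prob p (fun ω => (g c (Key ω) = a ∧ Cf ω = c) ∧ Key ω = k)
          = if g c k = a then prob p (fun ω => Key ω = k ∧ Cf ω = c) else 0 := by
        intro k
        by_cases hgk : g c k = a
        · rw [if_pos hgk]
          refine prob_congr fun ω hω => ?_
          constructor
          · rintro ⟨⟨_, hC⟩, hK⟩
            exact ⟨hK, hC⟩
          · rintro ⟨hK, hC⟩
            exact ⟨⟨by rw [hK, hgk], hC⟩, hK⟩
        · rw [if_neg hgk]
          have hF : prob p (fun ω => (g c (Key ω) = a ∧ Cf ω = c) ∧ Key ω = k)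
              = prob p (fun _ => False) := by
            refine prob_congr fun ω hω => ?_
            constructor
            · rintro ⟨⟨hga, _⟩, hK⟩
              exact hgk (by rw [← hK]; exact hga)
            · exact False.elim
          rw [hF]
          unfold prob
          simp
      rw [h1, ← h2, Finset.sum_filter]
      exact Finset.sum_congr rfl fun k _ => h3 k
  have h2 : (0:ℝ) < Real.log 2 := Real.log_pos one_lt_two
  unfold entropy
  rw [ge_iff_le, neg_le_neg_iff]
  simp only [Real.logb, ← mul_div_assoc, ← Finset.sum_div]
  exact (div_le_div_iff_of_pos_right h2).mpr main
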